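/- Let R = (R_1,...,R_n) be a profile that is intermediate on a median graph G = (V,E). Suppose the profile has repeated orders, i.e., R_i = R_j for some i ≠ j. Then the quotient graph obtained by contracting each connected component of the subgraph induced by vertices carrying equal linear orders is again a median graph, and the reduced profile of distinct linear orders (one per contracted component) is intermediate on it. -/

import Mathlib

open SimpleGraph

/-- `Geo G u w v` : vertex `w` lies geodesically between `u` and `v`
(i.e. on some shortest path from `u` to `v`). -/
def Geo {V : Type*} (G : SimpleGraph V) (u w v : V) : Prop :=
  G.dist u w + G.dist w v = G.dist u v

/-- A set of vertices is geodesically convex if it contains every vertex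
lying on a shortest path between two of its members. -/
def GConvex {V : Type*} (G : SimpleGraph V) (C : Set V) : Prop :=
  ∀ u ∈ C, ∀ v ∈ C, ∀ w, Geo G u w v → w ∈ C

/-- A profile of strict preference relations is intermediate on `G` if every
set `V_{ab}` of voters preferring `a` to `b` is geodesically convex. -/
def Intermediate {V A : Type*} (G : SimpleGraph V) (R : V → A → A → Prop) : Prop :=
  ∀ a b : A, GConvex G {i | R i a b}

/-- A median graph: connected, and every triple of vertices has a unique median. -/
def MedianGraph {V : Type*} (G : SimpleGraph V) : Prop :=
  G.Connected ∧ ∀ u v w : V, ∃! m : V, Geo G u m v ∧ Geo G u m w ∧ Geo G v m w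

namespace Stmt6

variable {V A : Type*}

def F (R : V → A → A → Prop) : Set (Set V) :=
  {h | ∃ a b, a ≠ b ∧ h = {i | R i a b}}

def SS (R : V → A → A → Prop) (u v : V) : Set (Set V) :=
  {h | h ∈ F R ∧ u ∈ h ∧ v ∉ h}

def WW (G : SimpleGraph V) (u v : V) : Set V := {x | G.dist x u < G.dist x v}

def st (R : V → A → A → Prop) : Setoid V :=
  ⟨fun u v => R u = R v, ⟨fun _ => rfl, Eq.symm, Eq.trans⟩⟩

def qm (R : V → A → A → Prop) (u : V) : Quotient (st R) := Quotient.mk (st R) u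

def HH (G : SimpleGraph V) (R : V → A → A → Prop) : SimpleGraph (Quotient (st R)) :=
  SimpleGraph.fromRel
    (fun x y : Quotient (st R) => ∃ u v : V,
      Quotient.mk (st R) u = x ∧ Quotient.mk (st R) v = y ∧ G.Adj u v)

section basic

variable {G : SimpleGraph V} {R : V → A → A → Prop}

lemma asy {r : A → A → Prop} (h : IsStrictTotalOrder A r) {a b : A}
    (hab : r a b) : ¬ r b a := fun hba =>
  h.toIrrefl.irrefl a (h.toIsTrans.trans a b a hab hba)

lemma not_rel_iff {r : A → A → Prop} (h : IsStrictTotalOrder A r) {a b : A}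
    (hab : a ≠ b) : ¬ r a b ↔ r b a :=
  ⟨fun hn => Classical.byContradiction fun hba => hab (h.toTrichotomous.trichotomous a b hn hba),
   fun hba hab' => asy h hba hab'⟩

lemma compl_eq (hR : ∀ i, IsStrictTotalOrder A (R i)) {a b : A} (hab : a ≠ b) :
    {i | R i a b}ᶜ = {i | R i b a} := by
  ext i
  simp only [Set.mem_compl_iff, Set.mem_setOf_eq]
  exact not_rel_iff (hR i) hab

lemma convF (hint : Intermediate G R) {h : Set V} (hF : h ∈ F R) : GConvex G h := by
  obtain ⟨a, b, hab, rfl⟩ := hF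
  exact hint a b

lemma convFc (hR : ∀ i, IsStrictTotalOrder A (R i)) (hint : Intermediate G R)
    {h : Set V} (hF : h ∈ F R) : GConvex G hᶜ := by
  obtain ⟨a, b, hab, rfl⟩ := hF
  rw [compl_eq hR hab]
  exact hint b a

lemma respect {h : Set V} (hF : h ∈ F R) {u v : V} (e : R u = R v) :
    u ∈ h → v ∈ h := by
  obtain ⟨a, b, hab, rfl⟩ := hF
  intro hu
  show R v a b
  rw [← e]
  exact hu

lemma sep (hR : ∀ i, IsStrictTotalOrder A (R i)) {u v : V} (hne : R u ≠ R v) :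
    ∃ h ∈ F R, u ∈ h ∧ v ∉ h := by
  have : ∃ a b, ¬ (R u a b ↔ R v a b) := by
    by_contra hc
    push_neg at hc
    exact hne (funext fun a => funext fun b => propext (hc a b))
  obtain ⟨a, b, hiff⟩ := this
  have hab : a ≠ b := by
    rintro rfl
    exact hiff ⟨fun h => absurd h ((hR u).toIrrefl.irrefl a),
      fun h => absurd h ((hR v).toIrrefl.irrefl a)⟩
  by_cases hu : R u a b
  · have hv : ¬ R v a b := fun hv => hiff ⟨fun _ => hv, fun _ => hu⟩
    exact ⟨{i | R i a b}, ⟨a, b, hab, rfl⟩, hu, hv⟩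
  · have hv : R v a b := by
      by_contra hv
      exact hiff ⟨fun h => absurd h hu, fun h => absurd h hv⟩
    refine ⟨{i | R i b a}, ⟨b, a, hab.symm, rfl⟩, (not_rel_iff (hR u) hab).mp hu, ?_⟩
    exact fun h => asy (hR v) hv h

lemma qm_eq {u v : V} : qm R u = qm R v ↔ R u = R v :=
  ⟨fun h => Quotient.exact h, fun h => Quotient.sound h⟩

lemma adj_dist_ne (hG : MedianGraph G) {u v : V} (huv : G.Adj u v) (x : V) :
    G.dist x u ≠ G.dist x v := by
  have hd1 : G.dist u v = 1 := dist_eq_one_iff_adj.mpr huv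
  obtain ⟨m, ⟨g1, g2, g3⟩, -⟩ := hG.2 x u v
  unfold Geo at g1 g2 g3
  have h3 : G.dist u m + G.dist m v = 1 := by rw [g3, hd1]
  have hc : G.dist v u = G.dist u v := dist_comm
  rcases Nat.add_eq_one_iff.mp h3 with ⟨h0, -⟩ | ⟨-, h0⟩
  · have he : u = m := (hG.1.dist_eq_zero_iff).mp h0
    subst he
    omega
  · have he : m = v := (hG.1.dist_eq_zero_iff).mp h0
    subst he
    omega

lemma wall_eq (hG : MedianGraph G) {h : Set V} (hh : GConvex G h) (hhc : GConvex G hᶜ)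
    {u v : V} (hu : u ∈ h) (hv : v ∉ h) (huv : G.Adj u v) : h = WW G u v := by
  have hd1 : G.dist u v = 1 := dist_eq_one_iff_adj.mpr huv
  ext x
  simp only [WW, Set.mem_setOf_eq]
  constructor
  · intro hx
    have hne := adj_dist_ne hG huv x
    by_contra hlt
    push_neg at hlt
    have hlt' : G.dist x v < G.dist x u := by omega
    have hc : G.dist v u = G.dist u v := dist_comm
    have heq : G.dist x v + G.dist v u = G.dist x u := by
      have := hG.1.dist_triangle (u := x) (v := v) (w := u)
      omega
    exact hv (hh x hx u hu v heq)
  · intro hx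
    have heq : G.dist x u + G.dist u v = G.dist x v := by
      have := hG.1.dist_triangle (u := x) (v := u) (w := v)
      omega
    by_contra hxh
    exact (hhc x hxh v hv u heq) hu

lemma adjH {u v : V} (hq : qm R u ≠ qm R v) (huv : G.Adj u v) :
    (HH G R).Adj (qm R u) (qm R v) :=
  ⟨hq, Or.inl ⟨u, v, rfl, rfl, huv⟩⟩

lemma reachH {u v : V} (p : G.Walk u v) : (HH G R).Reachable (qm R u) (qm R v) := by
  induction p with
  | nil => exact Reachable.refl _
  | @cons u b v a p ih =>
    by_cases h : qm R u = qm R b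
    · rw [h]; exact ih
    · exact (adjH h a).reachable.trans ih

lemma emptySS {u v : V} (e : R u = R v) : SS R u v = ∅ := by
  ext h
  simp only [SS, Set.mem_setOf_eq, Set.mem_empty_iff_false, iff_false, not_and]
  intro hF hu
  exact fun hv => hv (respect hF e hu)

lemma LB (hG : MedianGraph G) (hR : ∀ i, IsStrictTotalOrder A (R i))
    (hint : Intermediate G R) :
    ∀ {x y : Quotient (st R)} (p : (HH G R).Walk x y) (u v : V),
      qm R u = x → qm R v = y → (SS R u v).Finite ∧ (SS R u v).ncard ≤ p.length := by
  intro x y p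
  induction p with
  | nil =>
    intro u v hu hv
    have e : R u = R v := qm_eq.mp (hu.trans hv.symm)
    rw [emptySS e]
    simp
  | @cons x y₁ y a q ih =>
    intro u v hu hv
    obtain ⟨hne, hrel⟩ := id a
    have hrep : ∃ u' v' : V, qm R u' = x ∧ qm R v' = y₁ ∧ G.Adj u' v' := by
      rcases hrel with ⟨u', v', h1, h2, hadj⟩ | ⟨v', u', h2, h1, hadj⟩
      · exact ⟨u', v', h1, h2, hadj⟩
      · exact ⟨u', v', h1, h2, hadj.symm⟩
    obtain ⟨u', v', h1, h2, hadj⟩ := hrep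
    have ih' := ih v' v h2 hv
    have hru : R u = R u' := qm_eq.mp (hu.trans h1.symm)
    have key : SS R u v ⊆ insert (WW G u' v') (SS R v' v) := by
      rintro h ⟨hF, huh, hvh⟩
      have hu' : u' ∈ h := respect hF hru huh
      by_cases hv' : v' ∈ h
      · exact Set.mem_insert_of_mem _ ⟨hF, hv', hvh⟩
      · have : h = WW G u' v' :=
          wall_eq hG (convF hint hF) (convFc hR hint hF) hu' hv' hadj
        rw [this]
        exact Set.mem_insert _ _
    have hfin : (SS R u v).Finite := (ih'.1.insert _).subset key
    refine ⟨hfin, ?_⟩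
    calc (SS R u v).ncard ≤ (insert (WW G u' v') (SS R v' v)).ncard :=
          Set.ncard_le_ncard key (ih'.1.insert _)
      _ ≤ (SS R v' v).ncard + 1 := Set.ncard_insert_le _ _
      _ ≤ q.length + 1 := by omega
      _ = (SimpleGraph.Walk.cons a q).length := by
          rw [SimpleGraph.Walk.length_cons]

lemma Sfin (hG : MedianGraph G) (hR : ∀ i, IsStrictTotalOrder A (R i))
    (hint : Intermediate G R) (u v : V) : (SS R u v).Finite := by
  obtain ⟨p⟩ := hG.1 u v
  obtain ⟨q⟩ := reachH (G := G) (R := R) p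
  exact (LB hG hR hint q u v rfl rfl).1

lemma connH (hG : MedianGraph G) : (HH G R).Connected := by
  rw [connected_iff]
  constructor
  · intro x y
    obtain ⟨u, rfl⟩ := Quotient.exists_rep x
    obtain ⟨v, rfl⟩ := Quotient.exists_rep y
    obtain ⟨p⟩ := hG.1 u v
    exact reachH p
  · have : Nonempty V := hG.1.nonempty
    exact ⟨qm R this.some⟩

lemma UB (hG : MedianGraph G) (hR : ∀ i, IsStrictTotalOrder A (R i))
    (hint : Intermediate G R) :
    ∀ (d : ℕ) (u v : V), G.dist u v ≤ d →
      (HH G R).dist (qm R u) (qm R v) ≤ (SS R u v).ncard := by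
  intro d
  induction d with
  | zero =>
    intro u v hle
    have he : u = v := hG.1.dist_eq_zero_iff.mp (Nat.le_zero.mp hle)
    subst he
    simp [dist_self]
  | succ d ih =>
    intro u v hle
    by_cases h0 : G.dist u v = 0
    · have he : u = v := hG.1.dist_eq_zero_iff.mp h0
      subst he
      simp [dist_self]
    · obtain ⟨p, hp⟩ := hG.1.exists_walk_length_eq_dist u v
      cases p with
      | nil => simp only [SimpleGraph.Walk.length_nil] at hp; omega
      | @cons _ u₁ _ a q =>
        rw [SimpleGraph.Walk.length_cons] at hp
        have hq : G.dist u₁ v ≤ q.length := dist_le q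
        have htr : G.dist u v ≤ G.dist u u₁ + G.dist u₁ v := hG.1.dist_triangle
        have ha1 : G.dist u u₁ = 1 := dist_eq_one_iff_adj.mpr a
        have hd1 : G.dist u₁ v = G.dist u v - 1 := by omega
        have hsub : SS R u₁ v ⊆ SS R u v := by
          rintro h ⟨hF, h1, h2⟩
          refine ⟨hF, ?_, h2⟩
          by_contra hun
          have hgeo : G.dist u u₁ + G.dist u₁ v = G.dist u v := by omega
          exact (convFc hR hint hF u hun v h2 u₁ hgeo) h1
        by_cases hqm : qm R u = qm R u₁
        · have ihh := ih u₁ v (by omega)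
          rw [show qm R u = qm R u₁ from hqm]
          exact le_trans ihh (Set.ncard_le_ncard hsub (Sfin hG hR hint u v))
        · have hne : R u ≠ R u₁ := fun e => hqm (qm_eq.mpr e)
          obtain ⟨hs, hFs, hus, hu1s⟩ := sep hR hne
          have hw : hs = WW G u u₁ :=
            wall_eq hG (convF hint hFs) (convFc hR hint hFs) hus hu1s a
          have hvs : v ∉ hs := by
            rw [hw]
            simp only [WW, Set.mem_setOf_eq, not_lt]
            have c1 : G.dist v u = G.dist u v := dist_comm
            have c2 : G.dist v u₁ = G.dist u₁ v := dist_comm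
            omega
          have hmem : hs ∈ SS R u v := ⟨hFs, hus, hvs⟩
          have hsub2 : SS R u₁ v ⊆ SS R u v \ {hs} := by
            rintro h hh
            refine ⟨hsub hh, ?_⟩
            simp only [Set.mem_singleton_iff]
            rintro rfl
            exact hu1s hh.2.1
          have hfin := Sfin hG hR hint u v
          have hm1 : (SS R u₁ v).ncard ≤ (SS R u v).ncard - 1 := by
            calc (SS R u₁ v).ncard ≤ (SS R u v \ {hs}).ncard :=
                  Set.ncard_le_ncard hsub2 hfin.diff
              _ = (SS R u v).ncard - 1 := Set.ncard_diff_singleton_of_mem hmem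
          have hpos : 0 < (SS R u v).ncard := (Set.ncard_pos hfin).mpr ⟨hs, hmem⟩
          have hadj : (HH G R).Adj (qm R u) (qm R u₁) := adjH hqm a
          have h1d : (HH G R).dist (qm R u) (qm R u₁) = 1 := dist_eq_one_iff_adj.mpr hadj
          have htr2 : (HH G R).dist (qm R u) (qm R v) ≤
              (HH G R).dist (qm R u) (qm R u₁) + (HH G R).dist (qm R u₁) (qm R v) :=
            (connH hG).dist_triangle
          have ihh := ih u₁ v (by omega)
          omega

lemma distH_eq (hG : MedianGraph G) (hR : ∀ i, IsStrictTotalOrder A (R i))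
    (hint : Intermediate G R) (u v : V) :
    (HH G R).dist (qm R u) (qm R v) = (SS R u v).ncard := by
  refine le_antisymm (UB hG hR hint (G.dist u v) u v le_rfl) ?_
  obtain ⟨p⟩ := hG.1 u v
  obtain ⟨q, hq⟩ := (reachH (G := G) (R := R) p).exists_walk_length_eq_dist
  have := (LB hG hR hint q u v rfl rfl).2
  omega

lemma geoH (hG : MedianGraph G) (hR : ∀ i, IsStrictTotalOrder A (R i))
    (hint : Intermediate G R) (u m v : V) :
    Geo (HH G R) (qm R u) (qm R m) (qm R v) ↔
      ((∀ h ∈ F R, u ∈ h → v ∈ h → m ∈ h) ∧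
       (∀ h ∈ F R, u ∉ h → v ∉ h → m ∉ h)) := by
  have f1 := Sfin hG hR hint u m
  have f2 := Sfin hG hR hint m v
  have f0 := Sfin hG hR hint u v
  set E1 : Set (Set V) := {h | h ∈ F R ∧ u ∈ h ∧ v ∈ h ∧ m ∉ h} with hE1
  set E2 : Set (Set V) := {h | h ∈ F R ∧ u ∉ h ∧ v ∉ h ∧ m ∈ h} with hE2
  have hsubE1 : E1 ⊆ SS R u m := by rintro h ⟨hF, h1, h2, h3⟩; exact ⟨hF, h1, h3⟩
  have hsubE2 : E2 ⊆ SS R m v := by rintro h ⟨hF, h1, h2, h3⟩; exact ⟨hF, h3, h2⟩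
  have fE1 := f1.subset hsubE1
  have fE2 := f2.subset hsubE2
  have hunion : SS R u m ∪ SS R m v = (SS R u v ∪ E1) ∪ E2 := by
    ext h
    by_cases hF : h ∈ F R <;>
      · simp only [SS, hE1, hE2, Set.mem_union, Set.mem_setOf_eq]
        tauto
  have d0 : Disjoint (SS R u m) (SS R m v) := by
    rw [Set.disjoint_left]; rintro h ⟨-, -, hm⟩ ⟨-, hm', -⟩; exact hm hm'
  have d1 : Disjoint (SS R u v) E1 := by
    rw [Set.disjoint_left]; rintro h ⟨-, -, hv⟩ ⟨-, -, hv', -⟩; exact hv hv'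
  have d2 : Disjoint (SS R u v ∪ E1) E2 := by
    rw [Set.disjoint_left]
    rintro h (⟨-, hu, -⟩ | ⟨-, hu, -, -⟩) ⟨-, hu', -, -⟩ <;> exact hu' hu
  have hcard : (SS R u m).ncard + (SS R m v).ncard
      = (SS R u v).ncard + E1.ncard + E2.ncard := by
    rw [← Set.ncard_union_eq d0 f1 f2, hunion,
      Set.ncard_union_eq d2 (f0.union fE1) fE2, Set.ncard_union_eq d1 f0 fE1]
  unfold Geo
  rw [distH_eq hG hR hint, distH_eq hG hR hint, distH_eq hG hR hint]
  constructor
  · intro hgeo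
    have he1 : E1 = ∅ := by rw [← Set.ncard_eq_zero fE1]; omega
    have he2 : E2 = ∅ := by rw [← Set.ncard_eq_zero fE2]; omega
    constructor
    · intro h hF h1 h2
      by_contra hm
      have hx : h ∈ E1 := ⟨hF, h1, h2, hm⟩; rw [he1] at hx; exact absurd hx (Set.notMem_empty h)
    · intro h hF h1 h2
      intro hm
      have hx : h ∈ E2 := ⟨hF, h1, h2, hm⟩; rw [he2] at hx; exact absurd hx (Set.notMem_empty h)
  · rintro ⟨c1, c2⟩
    have he1 : E1 = ∅ := by
      ext h
      simp only [hE1, Set.mem_setOf_eq, Set.mem_empty_iff_false, iff_false, not_and]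
      intro hF h1 h2
      exact not_not_intro (c1 h hF h1 h2)
    have he2 : E2 = ∅ := by
      ext h
      simp only [hE2, Set.mem_setOf_eq, Set.mem_empty_iff_false, iff_false, not_and]
      intro hF h1 h2
      exact c2 h hF h1 h2
    rw [he1, he2, Set.ncard_empty] at hcard
    omega

set_option maxHeartbeats 1000000 in
lemma median_majority (hG : MedianGraph G) (hR : ∀ i, IsStrictTotalOrder A (R i))
    (hint : Intermediate G R) {u v w p : V}
    (c1 : Geo (HH G R) (qm R u) (qm R p) (qm R v))
    (c2 : Geo (HH G R) (qm R u) (qm R p) (qm R w))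
    (c3 : Geo (HH G R) (qm R v) (qm R p) (qm R w))
    {h : Set V} (hF : h ∈ F R) :
    (p ∈ h ↔ ((u ∈ h ∧ v ∈ h) ∨ (u ∈ h ∧ w ∈ h) ∨ (v ∈ h ∧ w ∈ h))) := by
  obtain ⟨a1, b1⟩ := (geoH hG hR hint u p v).mp c1
  obtain ⟨a2, b2⟩ := (geoH hG hR hint u p w).mp c2
  obtain ⟨a3, b3⟩ := (geoH hG hR hint v p w).mp c3
  have A1 := a1 h hF
  have B1 := b1 h hF
  have A2 := a2 h hF
  have B2 := b2 h hF
  have A3 := a3 h hF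
  have B3 := b3 h hF
  clear a1 b1 a2 b2 a3 b3 c1 c2 c3
  tauto

theorem medH (hG : MedianGraph G) (hR : ∀ i, IsStrictTotalOrder A (R i))
    (hint : Intermediate G R) : MedianGraph (HH G R) := by
  refine ⟨connH hG, ?_⟩
  intro x y z
  obtain ⟨u, rfl⟩ := (Quotient.exists_rep x : ∃ c, qm R c = x)
  obtain ⟨v, rfl⟩ := (Quotient.exists_rep y : ∃ c, qm R c = y)
  obtain ⟨w, rfl⟩ := (Quotient.exists_rep z : ∃ c, qm R c = z)
  obtain ⟨m, ⟨g1, g2, g3⟩, -⟩ := hG.2 u v w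
  have hm1 : Geo (HH G R) (qm R u) (qm R m) (qm R v) :=
    (geoH hG hR hint u m v).mpr ⟨fun h hF hu hv => convF hint hF u hu v hv m g1,
      fun h hF hu hv => convFc hR hint hF u hu v hv m g1⟩
  have hm2 : Geo (HH G R) (qm R u) (qm R m) (qm R w) :=
    (geoH hG hR hint u m w).mpr ⟨fun h hF hu hw => convF hint hF u hu w hw m g2,
      fun h hF hu hw => convFc hR hint hF u hu w hw m g2⟩
  have hm3 : Geo (HH G R) (qm R v) (qm R m) (qm R w) :=
    (geoH hG hR hint v m w).mpr ⟨fun h hF hv hw => convF hint hF v hv w hw m g3,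
      fun h hF hv hw => convFc hR hint hF v hv w hw m g3⟩
  refine ⟨qm R m, ⟨hm1, hm2, hm3⟩, ?_⟩
  rintro p ⟨c1, c2, c3⟩
  obtain ⟨p', rfl⟩ := (Quotient.exists_rep p : ∃ c, qm R c = p)
  refine qm_eq.mpr (funext fun a => funext fun b => propext ?_)
  by_cases hab : a = b
  · subst hab
    exact iff_of_false ((hR p').toIrrefl.irrefl a) ((hR m).toIrrefl.irrefl a)
  · have hF : {i | R i a b} ∈ F R := ⟨a, b, hab, rfl⟩
    have h1 := median_majority hG hR hint c1 c2 c3 hF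
    have h2 := median_majority hG hR hint hm1 hm2 hm3 hF
    show R p' a b ↔ R m a b
    exact h1.trans h2.symm

theorem intH (hG : MedianGraph G) (hR : ∀ i, IsStrictTotalOrder A (R i))
    (hint : Intermediate G R) :
    Intermediate (HH G R)
      (fun q a b => ∃ u : V, Quotient.mk (st R) u = q ∧ R u a b) := by
  intro a b x hx y hy z hz
  obtain ⟨u, rfl, hu⟩ := hx
  obtain ⟨v, rfl, hv⟩ := hy
  obtain ⟨w', rfl⟩ := (Quotient.exists_rep z : ∃ c, qm R c = z)
  have hab : a ≠ b := fun e => (hR u).toIrrefl.irrefl b (e ▸ hu)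
  have hF : {i | R i a b} ∈ F R := ⟨a, b, hab, rfl⟩
  exact ⟨w', rfl, ((geoH hG hR hint u w' v).mp hz).1 _ hF hu hv⟩

end basic

end Stmt6

/-- Contracting the classes of voters carrying equal linear orders of an
intermediate profile on a median graph yields again a median graph, on which
the reduced profile of distinct orders is intermediate. -/
theorem stmt6 {V A : Type*} (G : SimpleGraph V) (hG : MedianGraph G)
    (R : V → A → A → Prop) (hR : ∀ i, IsStrictTotalOrder A (R i))
    (hint : Intermediate G R)
    {i j : V} (hij : i ≠ j) (hRij : R i = R j) :
    letI s : Setoid V := ⟨fun u v => R u = R v, ⟨fun _ => rfl, Eq.symm, Eq.trans⟩⟩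
    MedianGraph (SimpleGraph.fromRel
        (fun x y : Quotient s => ∃ u v : V,
          Quotient.mk s u = x ∧ Quotient.mk s v = y ∧ G.Adj u v)) ∧
    Intermediate (A := A) (SimpleGraph.fromRel
        (fun x y : Quotient s => ∃ u v : V,
          Quotient.mk s u = x ∧ Quotient.mk s v = y ∧ G.Adj u v))
      (fun q a b => ∃ u : V, Quotient.mk s u = q ∧ R u a b) := by
  exact ⟨Stmt6.medH hG hR hint, Stmt6.intH hG hR hint⟩
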